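/- Let 𝒢 be a snake graph and let a be any edge of its first tile G_1. Then there is exactly one perfect matching P of 𝒢 such that a ∈ P and every edge of P other than a is a boundary edge of 𝒢. -/
import Mathlib


/-!
Basic definitions: tiles, snake graphs, perfect matchings, sign functions.

A tile is a unit square in the plane, identified by the coordinates of its
south-west corner.  An edge of the integer grid is encoded as a pair
`(p, b) : (ℤ × ℤ) × Bool` where `b = true` means the horizontal edge from `p`
to `p + (1,0)` and `b = false` means the vertical edge from `p` to `p + (0,1)`.

A snake graph is a sequence of tiles `G_1, …, G_d` (`d ≥ 1`) in which each
tile `G_{i+1}` is either the tile directly to the east or directly to the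
north of `G_i`; this is exactly the combinatorial content of conditions
(i)–(iii) in the definition of a snake graph.  We record the position of the
first tile and the sequence of steps (`true` = east, `false` = north).
-/

abbrev Pt : Type := ℤ × ℤ

/-- An edge of the integer grid: `(p, true)` is the horizontal unit edge with left
endpoint `p`, and `(p, false)` is the vertical unit edge with bottom endpoint `p`. -/
abbrev Edge : Type := Pt × Bool

/-- The two endpoints of an edge. -/
def Edge.ends (e : Edge) : Finset Pt :=
  {e.1, e.1 + (if e.2 then ((1 : ℤ), (0 : ℤ)) else ((0 : ℤ), (1 : ℤ)))}

/-- The south edge of the tile with south-west corner `p`. -/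
def southEdge (p : Pt) : Edge := (p, true)
/-- The north edge of the tile with south-west corner `p`. -/
def northEdge (p : Pt) : Edge := (p + ((0 : ℤ), (1 : ℤ)), true)
/-- The west edge of the tile with south-west corner `p`. -/
def westEdge (p : Pt) : Edge := (p, false)
/-- The east edge of the tile with south-west corner `p`. -/
def eastEdge (p : Pt) : Edge := (p + ((1 : ℤ), (0 : ℤ)), false)

/-- The four edges of the tile with south-west corner `p`. -/
def tileEdges (p : Pt) : Finset Edge := {southEdge p, northEdge p, westEdge p, eastEdge p}

/-- The four vertices of the tile with south-west corner `p`. -/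
def tileVerts (p : Pt) : Finset Pt :=
  {p, p + ((1 : ℤ), (0 : ℤ)), p + ((0 : ℤ), (1 : ℤ)), p + ((1 : ℤ), (1 : ℤ))}

/-- A snake graph `𝒢 = (G_1, …, G_d)`, `d ≥ 1`: a sequence of tiles in which each
tile `G_{i+1}` shares exactly one edge with `G_i`, this edge being the north edge of
`G_i` and the south edge of `G_{i+1}`, or the east edge of `G_i` and the west edge of
`G_{i+1}`.  `step i = true` means `G_{i+1}` is east of `G_i`, `step i = false` means
`G_{i+1}` is north of `G_i`; only the values `step i` for `1 ≤ i ≤ d - 1` are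
relevant. -/
structure SnakeGraph where
  d : ℕ
  one_le_d : 1 ≤ d
  base : Pt
  step : ℕ → Bool

namespace SnakeGraph

/-- The south-west corner of the `i`-th tile, `1 ≤ i ≤ d`. -/
def pos (G : SnakeGraph) (i : ℕ) : Pt :=
  G.base + ∑ j ∈ Finset.Ico 1 i,
    (if G.step j then ((1 : ℤ), (0 : ℤ)) else ((0 : ℤ), (1 : ℤ)))

/-- The set of edges of the snake graph. -/
def edges (G : SnakeGraph) : Finset Edge :=
  (Finset.Icc 1 G.d).biUnion fun i => tileEdges (G.pos i)

/-- The set of vertices of the snake graph. -/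
def verts (G : SnakeGraph) : Finset Pt :=
  (Finset.Icc 1 G.d).biUnion fun i => tileVerts (G.pos i)

/-- The interior edge `e_i` shared by the tiles `G_i` and `G_{i+1}` (`1 ≤ i ≤ d-1`). -/
def intEdge (G : SnakeGraph) (i : ℕ) : Edge :=
  if G.step i then eastEdge (G.pos i) else northEdge (G.pos i)

/-- An edge is interior if it is one of the edges `e_1, …, e_{d-1}`. -/
def IsInteriorEdge (G : SnakeGraph) (e : Edge) : Prop :=
  ∃ i, 1 ≤ i ∧ i < G.d ∧ e = G.intEdge i

/-- A boundary edge is an edge of the snake graph which is not interior. -/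
def IsBoundaryEdge (G : SnakeGraph) (e : Edge) : Prop :=
  e ∈ G.edges ∧ ¬ G.IsInteriorEdge e

/-- A perfect matching of the snake graph: a set of edges of `G` such that every
vertex of `G` is incident to exactly one edge of the set. -/
def IsPerfectMatching (G : SnakeGraph) (P : Finset Edge) : Prop :=
  (∀ e ∈ P, e ∈ G.edges) ∧ ∀ v ∈ G.verts, ∃! e, e ∈ P ∧ v ∈ Edge.ends e

/-- A sign function on the snake graph: on every tile the north and west edges have
the same sign, the south and east edges have the same sign, and the signs of the
north and south edges are opposite.  (Signs are encoded as `Bool`.) -/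
def IsSignFunction (G : SnakeGraph) (f : Edge → Bool) : Prop :=
  ∀ i, 1 ≤ i → i ≤ G.d →
    f (northEdge (G.pos i)) = f (westEdge (G.pos i)) ∧
    f (southEdge (G.pos i)) = f (eastEdge (G.pos i)) ∧
    f (northEdge (G.pos i)) = ! f (southEdge (G.pos i))

end SnakeGraph

namespace SnakeSol
open SnakeGraph

def lv (p : Pt) : ℤ := p.1 + p.2

lemma lv_add (p q : Pt) : lv (p + q) = lv p + lv q := by
  simp [lv, Prod.fst_add, Prod.snd_add]; ring

lemma mem_ends (e : Edge) (v : Pt) :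
    v ∈ e.ends ↔ v = e.1 ∨ v = e.1 + (if e.2 then ((1:ℤ),(0:ℤ)) else ((0:ℤ),(1:ℤ))) := by
  simp [Edge.ends]

lemma mem_tileEdges (t : Pt) (e : Edge) :
    e ∈ tileEdges t ↔ e = (t, true) ∨ e = (t + ((0:ℤ),(1:ℤ)), true) ∨
      e = (t, false) ∨ e = (t + ((1:ℤ),(0:ℤ)), false) := by
  simp [tileEdges, southEdge, northEdge, westEdge, eastEdge]

lemma mem_tileVerts (t v : Pt) :
    v ∈ tileVerts t ↔ v = t ∨ v = t + ((1:ℤ),(0:ℤ)) ∨ v = t + ((0:ℤ),(1:ℤ)) ∨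
      v = t + ((1:ℤ),(1:ℤ)) := by
  simp [tileVerts]

lemma ends_subset_tileVerts {t : Pt} {e : Edge} (h : e ∈ tileEdges t) :
    ∀ v ∈ e.ends, v ∈ tileVerts t := by
  intro v hv
  rcases (mem_tileEdges t e).1 h with h|h|h|h <;> subst h <;>
    rcases (mem_ends _ v).1 hv with h|h <;> subst h <;>
    simp [mem_tileVerts, Prod.ext_iff, Prod.fst_add, Prod.snd_add] <;> omega

lemma mem_edges {G : SnakeGraph} {e : Edge} :
    e ∈ G.edges ↔ ∃ i, 1 ≤ i ∧ i ≤ G.d ∧ e ∈ tileEdges (G.pos i) := by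
  simp [SnakeGraph.edges, Finset.mem_biUnion, Finset.mem_Icc, and_assoc]

lemma mem_verts {G : SnakeGraph} {v : Pt} :
    v ∈ G.verts ↔ ∃ i, 1 ≤ i ∧ i ≤ G.d ∧ v ∈ tileVerts (G.pos i) := by
  simp [SnakeGraph.verts, Finset.mem_biUnion, Finset.mem_Icc, and_assoc]

lemma mem_verts_of_mem_edges {G : SnakeGraph} {e : Edge} {v : Pt}
    (he : e ∈ G.edges) (hv : v ∈ e.ends) : v ∈ G.verts := by
  obtain ⟨i, h1, h2, h3⟩ := mem_edges.1 he
  exact mem_verts.2 ⟨i, h1, h2, ends_subset_tileVerts h3 v hv⟩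

lemma intEdge_mem_tileEdges (G : SnakeGraph) (i : ℕ) :
    G.intEdge i ∈ tileEdges (G.pos i) := by
  by_cases h : G.step i <;>
    simp [SnakeGraph.intEdge, h, mem_tileEdges, eastEdge, northEdge]

lemma mem_edges_of_interior {G : SnakeGraph} {e : Edge} (h : G.IsInteriorEdge e) :
    e ∈ G.edges := by
  obtain ⟨i, h1, h2, rfl⟩ := h
  exact mem_edges.2 ⟨i, h1, le_of_lt h2, intEdge_mem_tileEdges G i⟩

lemma pos_one (G : SnakeGraph) : G.pos 1 = G.base := by
  simp [SnakeGraph.pos]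

lemma pos_succ (G : SnakeGraph) (i : ℕ) (hi : 1 ≤ i) :
    G.pos (i+1) = G.pos i + (if G.step i then ((1:ℤ),(0:ℤ)) else ((0:ℤ),(1:ℤ))) := by
  unfold SnakeGraph.pos
  rw [Finset.sum_Ico_succ_top hi, add_assoc]

lemma lv_pos (G : SnakeGraph) (i : ℕ) (hi : 1 ≤ i) :
    lv (G.pos i) = lv G.base + i - 1 := by
  induction i, hi using Nat.le_induction with
  | base => simp [pos_one]
  | succ n hn ih =>
      rw [pos_succ G n hn, lv_add, ih]
      by_cases h : G.step n <;> simp [h, lv] <;> push_cast <;> ring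

lemma tileVerts_lv {t v : Pt} (h : v ∈ tileVerts t) :
    lv v = lv t ∨ lv v = lv t + 1 ∨ lv v = lv t + 2 := by
  rcases (mem_tileVerts t v).1 h with h|h|h|h <;> subst h <;>
    simp [lv, Prod.fst_add, Prod.snd_add] <;> omega

lemma tileVerts_top {t v : Pt} (h : v ∈ tileVerts t) (h2 : lv v = lv t + 2) :
    v = t + ((1:ℤ),(1:ℤ)) := by
  rcases (mem_tileVerts t v).1 h with h|h|h|h <;> subst h <;>
    simp_all [lv, Prod.fst_add, Prod.snd_add] <;> omega

lemma tileEdges_lv {t : Pt} {e : Edge} (h : e ∈ tileEdges t) :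
    lv e.1 = lv t ∨ lv e.1 = lv t + 1 := by
  rcases (mem_tileEdges t e).1 h with h|h|h|h <;> subst h <;>
    simp [lv, Prod.fst_add, Prod.snd_add] <;> omega

lemma tileEdges_top {t : Pt} {e : Edge} (h : e ∈ tileEdges t) (h2 : lv e.1 = lv t + 1) :
    e = (t + ((0:ℤ),(1:ℤ)), true) ∨ e = (t + ((1:ℤ),(0:ℤ)), false) := by
  rcases (mem_tileEdges t e).1 h with h|h|h|h <;> subst h <;>
    simp_all [lv, Prod.fst_add, Prod.snd_add] <;> omega

lemma intEdge_shape (G : SnakeGraph) (i : ℕ) :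
    G.intEdge i = (G.pos i + ((1:ℤ),(0:ℤ)), false) ∨
    G.intEdge i = (G.pos i + ((0:ℤ),(1:ℤ)), true) := by
  by_cases h : G.step i <;> simp [SnakeGraph.intEdge, h, eastEdge, northEdge]

lemma intEdge_lv (G : SnakeGraph) (i : ℕ) :
    lv (G.intEdge i).1 = lv (G.pos i) + 1 := by
  rcases intEdge_shape G i with h|h <;> rw [h] <;>
    simp [lv, Prod.fst_add, Prod.snd_add] <;> omega

end SnakeSol

namespace SnakeSol
open SnakeGraph

set_option maxHeartbeats 2000000 in
lemma step_lemma (G G' : SnakeGraph) (a en s1 s2 far : Edge) (p x y u w : Pt)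
    (hE : ∀ e, e ∈ G.edges ↔ e ∈ G'.edges ∨ e ∈ tileEdges p)
    (hV : ∀ v, v ∈ G.verts ↔ v ∈ G'.verts ∨ v ∈ tileVerts p)
    (hInt : ∀ e, G.IsInteriorEdge e ↔ G'.IsInteriorEdge e ∨ e = en)
    (hTE : ∀ e, e ∈ tileEdges p ↔ e = en ∨ e = s1 ∨ e = s2 ∨ e = far)
    (hTV : ∀ v, v ∈ tileVerts p ↔ v = x ∨ v = y ∨ v = u ∨ v = w)
    (hen : ∀ v, v ∈ Edge.ends en ↔ v = x ∨ v = y)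
    (hs1 : ∀ v, v ∈ Edge.ends s1 ↔ v = x ∨ v = u)
    (hs2 : ∀ v, v ∈ Edge.ends s2 ↔ v = y ∨ v = w)
    (hfar : ∀ v, v ∈ Edge.ends far ↔ v = u ∨ v = w)
    (hxy : x ≠ y) (hxu : x ≠ u) (hxw : x ≠ w) (hyu : y ≠ u) (hyw : y ≠ w) (huw : u ≠ w)
    (huG : u ∉ G'.verts) (hwG : w ∉ G'.verts)
    (henE : en ∈ G'.edges) (henI : ¬ G'.IsInteriorEdge en)
    (hs1E : s1 ∉ G'.edges) (hs2E : s2 ∉ G'.edges) (hfarE : far ∉ G'.edges)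
    (has1 : a ≠ s1) (has2 : a ≠ s2) (hafar : a ≠ far)
    (IH : ∃! P : Finset Edge, G'.IsPerfectMatching P ∧ a ∈ P ∧
      ∀ e ∈ P, e ≠ a → G'.IsBoundaryEdge e) :
    ∃! P : Finset Edge, G.IsPerfectMatching P ∧ a ∈ P ∧
      ∀ e ∈ P, e ≠ a → G.IsBoundaryEdge e := by
  classical
  -- membership of the four tile edges/vertices
  have hxen : x ∈ Edge.ends en := (hen x).2 (Or.inl rfl)
  have hyen : y ∈ Edge.ends en := (hen y).2 (Or.inr rfl)
  have hxs1 : x ∈ Edge.ends s1 := (hs1 x).2 (Or.inl rfl)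
  have hus1 : u ∈ Edge.ends s1 := (hs1 u).2 (Or.inr rfl)
  have hys2 : y ∈ Edge.ends s2 := (hs2 y).2 (Or.inl rfl)
  have hws2 : w ∈ Edge.ends s2 := (hs2 w).2 (Or.inr rfl)
  have hufar : u ∈ Edge.ends far := (hfar u).2 (Or.inl rfl)
  have hwfar : w ∈ Edge.ends far := (hfar w).2 (Or.inr rfl)
  -- distinctness of the four edges
  have hens1 : en ≠ s1 := by
    intro h; rw [h] at hyen
    rcases (hs1 y).1 hyen with h'|h'
    · exact hxy h'.symm
    · exact hyu h' 
  have hens2 : en ≠ s2 := by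
    intro h; rw [h] at hxen
    rcases (hs2 x).1 hxen with h'|h'
    · exact hxy h'
    · exact hxw h' 
  have henfar : en ≠ far := by
    intro h; rw [h] at hxen
    rcases (hfar x).1 hxen with h'|h'
    · exact hxu h'
    · exact hxw h' 
  have hs1s2 : s1 ≠ s2 := by
    intro h; rw [h] at hxs1
    rcases (hs2 x).1 hxs1 with h'|h'
    · exact hxy h'
    · exact hxw h' 
  have hs1far : s1 ≠ far := by
    intro h; rw [h] at hxs1
    rcases (hfar x).1 hxs1 with h'|h'
    · exact hxu h'
    · exact hxw h' 
  have hs2far : s2 ≠ far := by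
    intro h; rw [h] at hys2
    rcases (hfar y).1 hys2 with h'|h'
    · exact hyu h'
    · exact hyw h' 
  -- tile vertices in G
  have hxV : x ∈ G'.verts := mem_verts_of_mem_edges henE hxen
  have hyV : y ∈ G'.verts := mem_verts_of_mem_edges henE hyen
  have huV : u ∈ G.verts := (hV u).2 (Or.inr ((hTV u).2 (Or.inr (Or.inr (Or.inl rfl)))))
  have hwV : w ∈ G.verts := (hV w).2 (Or.inr ((hTV w).2 (Or.inr (Or.inr (Or.inr rfl)))))
  have hxVG : x ∈ G.verts := (hV x).2 (Or.inl hxV)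
  have hyVG : y ∈ G.verts := (hV y).2 (Or.inl hyV)
  -- tile edges in G, non-interior
  have hs1EG : s1 ∈ G.edges := (hE s1).2 (Or.inr ((hTE s1).2 (Or.inr (Or.inl rfl))))
  have hs2EG : s2 ∈ G.edges := (hE s2).2 (Or.inr ((hTE s2).2 (Or.inr (Or.inr (Or.inl rfl)))))
  have hfarEG : far ∈ G.edges := (hE far).2 (Or.inr ((hTE far).2 (Or.inr (Or.inr (Or.inr rfl)))))
  have hs1B : G.IsBoundaryEdge s1 := by
    refine ⟨hs1EG, ?_⟩
    rw [hInt]; rintro (h | h)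
    · exact hs1E (mem_edges_of_interior h)
    · exact hens1 h.symm
  have hs2B : G.IsBoundaryEdge s2 := by
    refine ⟨hs2EG, ?_⟩
    rw [hInt]; rintro (h | h)
    · exact hs2E (mem_edges_of_interior h)
    · exact hens2 h.symm
  have hfarB : G.IsBoundaryEdge far := by
    refine ⟨hfarEG, ?_⟩
    rw [hInt]; rintro (h | h)
    · exact hfarE (mem_edges_of_interior h)
    · exact henfar h.symm
  obtain ⟨P₀, ⟨hPM₀, haP₀, hB₀⟩, huniq₀⟩ := IH
  have hP₀E : ∀ e ∈ P₀, e ∈ G'.edges := hPM₀.1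
  have hfarP₀ : far ∉ P₀ := fun h => hfarE (hP₀E _ h)
  have hs1P₀ : s1 ∉ P₀ := fun h => hs1E (hP₀E _ h)
  have hs2P₀ : s2 ∉ P₀ := fun h => hs2E (hP₀E _ h)
  -- vertices covered by edges of G' are in G'.verts
  have hcovG' : ∀ e ∈ P₀, ∀ v ∈ Edge.ends e, v ∈ G'.verts :=
    fun e he v hv => mem_verts_of_mem_edges (hP₀E e he) hv
  -- CASE ANALYSIS LEMMAS (uniqueness direction)
  have caseFar : ∀ P : Finset Edge,
      (G.IsPerfectMatching P ∧ a ∈ P ∧ ∀ e ∈ P, e ≠ a → G.IsBoundaryEdge e) →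
      far ∈ P → P = insert far P₀ ∧ (en ∈ P₀ → a = en) := by
    intro P ⟨hPM, haP, hBP⟩ hfc
    have hPE := hPM.1
    have hs1P : s1 ∉ P := by
      intro h
      exact hs1far ((hPM.2 u huV).unique ⟨h, hus1⟩ ⟨hfc, hufar⟩)
    have hs2P : s2 ∉ P := by
      intro h
      exact hs2far ((hPM.2 w hwV).unique ⟨h, hws2⟩ ⟨hfc, hwfar⟩)
    have hPsub : ∀ e ∈ P, e ≠ far → e ∈ G'.edges := by
      intro e he hne
      rcases (hE e).1 (hPE e he) with h | h
      · exact h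
      · rcases (hTE e).1 h with rfl | rfl | rfl | rfl
        · exact henE
        · exact absurd he hs1P
        · exact absurd he hs2P
        · exact absurd rfl hne
    have hP' : G'.IsPerfectMatching (P.erase far) ∧ a ∈ P.erase far ∧
        ∀ e ∈ P.erase far, e ≠ a → G'.IsBoundaryEdge e := by
      refine ⟨⟨fun e he => hPsub e (Finset.mem_of_mem_erase he) (Finset.ne_of_mem_erase he), ?_⟩, ?_, ?_⟩
      · intro v hv
        obtain ⟨e₀, ⟨he₀P, he₀v⟩, hu₀⟩ := hPM.2 v ((hV v).2 (Or.inl hv))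
        have he₀far : e₀ ≠ far := by
          rintro rfl
          rcases (hfar v).1 he₀v with rfl | rfl
          · exact huG hv
          · exact hwG hv
        refine ⟨e₀, ⟨Finset.mem_erase.2 ⟨he₀far, he₀P⟩, he₀v⟩, ?_⟩
        intro e ⟨heP, hev⟩
        exact hu₀ e ⟨Finset.mem_of_mem_erase heP, hev⟩
      · exact Finset.mem_erase.2 ⟨hafar, haP⟩
      · intro e he hea
        have hb := hBP e (Finset.mem_of_mem_erase he) hea
        refine ⟨hPsub e (Finset.mem_of_mem_erase he) (Finset.ne_of_mem_erase he), ?_⟩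
        intro hint
        exact hb.2 ((hInt e).2 (Or.inl hint))
    have hPP₀ : P.erase far = P₀ := huniq₀ _ hP'
    constructor
    · rw [← hPP₀, Finset.insert_erase hfc]
    · intro henP₀
      have henP : en ∈ P := Finset.mem_of_mem_erase (hPP₀ ▸ henP₀)
      by_contra hne
      exact (hBP en henP (fun h => hne h.symm)).2 ((hInt en).2 (Or.inr rfl))
  have caseSide : ∀ P : Finset Edge,
      (G.IsPerfectMatching P ∧ a ∈ P ∧ ∀ e ∈ P, e ≠ a → G.IsBoundaryEdge e) →
      far ∉ P → P = insert s1 (insert s2 (P₀.erase en)) ∧ en ∈ P₀ ∧ a ≠ en := by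
    intro P ⟨hPM, haP, hBP⟩ hfc
    have hPE := hPM.1
    have key : ∀ e ∈ P, ∀ v ∈ Edge.ends e, v = u ∨ v = w → e = s1 ∨ e = s2 := by
      intro e he v hv hvuw
      rcases (hE e).1 (hPE e he) with h | h
      · exfalso
        rcases hvuw with rfl | rfl
        · exact huG (mem_verts_of_mem_edges h hv)
        · exact hwG (mem_verts_of_mem_edges h hv)
      · rcases (hTE e).1 h with rfl | rfl | rfl | rfl
        · exfalso
          rcases (hen v).1 hv with rfl | rfl
          · rcases hvuw with h'|h'
            · exact hxu h'
            · exact hxw h'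
          · rcases hvuw with h'|h'
            · exact hyu h'
            · exact hyw h'
        · exact Or.inl rfl
        · exact Or.inr rfl
        · exact absurd he hfc
    have hs1P : s1 ∈ P := by
      obtain ⟨e₀, ⟨he₀P, he₀v⟩, _⟩ := hPM.2 u huV
      rcases key e₀ he₀P u he₀v (Or.inl rfl) with rfl | rfl
      · exact he₀P
      · exact absurd ((hs2 u).1 he₀v) (fun h => h.elim (fun h' => hyu h'.symm) (fun h' => huw h'))
    have hs2P : s2 ∈ P := by
      obtain ⟨e₀, ⟨he₀P, he₀v⟩, _⟩ := hPM.2 w hwV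
      rcases key e₀ he₀P w he₀v (Or.inr rfl) with rfl | rfl
      · exact absurd ((hs1 w).1 he₀v) (fun h => h.elim (fun h' => hxw h'.symm) (fun h' => huw h'.symm))
      · exact he₀P
    have henP : en ∉ P := by
      intro h
      exact hens1 ((hPM.2 x hxVG).unique ⟨h, hxen⟩ ⟨hs1P, hxs1⟩)
    have hPsub : ∀ e ∈ P, e ≠ s1 → e ≠ s2 → e ∈ G'.edges := by
      intro e he h1 h2
      rcases (hE e).1 (hPE e he) with h | h
      · exact h
      · rcases (hTE e).1 h with rfl | rfl | rfl | rfl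
        · exact absurd he henP
        · exact absurd rfl h1
        · exact absurd rfl h2
        · exact absurd he hfc
    set Q := (P.erase s1).erase s2 with hQ
    have hQsub : ∀ e ∈ Q, e ∈ P ∧ e ≠ s1 ∧ e ≠ s2 := by
      intro e he
      exact ⟨Finset.mem_of_mem_erase (Finset.mem_of_mem_erase he),
        Finset.ne_of_mem_erase (Finset.mem_of_mem_erase he), Finset.ne_of_mem_erase he⟩
    have hQmem : ∀ e, e ∈ P → e ≠ s1 → e ≠ s2 → e ∈ Q := by
      intro e he h1 h2
      exact Finset.mem_erase.2 ⟨h2, Finset.mem_erase.2 ⟨h1, he⟩⟩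
    have hP' : G'.IsPerfectMatching (insert en Q) ∧ a ∈ insert en Q ∧
        ∀ e ∈ insert en Q, e ≠ a → G'.IsBoundaryEdge e := by
      refine ⟨⟨?_, ?_⟩, ?_, ?_⟩
      · intro e he
        rcases Finset.mem_insert.1 he with rfl | he
        · exact henE
        · obtain ⟨h1, h2, h3⟩ := hQsub e he
          exact hPsub e h1 h2 h3
      · intro v hv
        by_cases hvx : v = x
        · subst hvx
          refine ⟨en, ⟨Finset.mem_insert_self _ _, hxen⟩, ?_⟩
          intro e ⟨heP, hev⟩
          rcases Finset.mem_insert.1 heP with rfl | he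
          · rfl
          · exfalso
            obtain ⟨h1, h2, _⟩ := hQsub e he
            exact h2 ((hPM.2 v hxVG).unique ⟨h1, hev⟩ ⟨hs1P, hxs1⟩)
        · by_cases hvy : v = y
          · subst hvy
            refine ⟨en, ⟨Finset.mem_insert_self _ _, hyen⟩, ?_⟩
            intro e ⟨heP, hev⟩
            rcases Finset.mem_insert.1 heP with rfl | he
            · rfl
            · exfalso
              obtain ⟨h1, _, h3⟩ := hQsub e he
              exact h3 ((hPM.2 v hyVG).unique ⟨h1, hev⟩ ⟨hs2P, hys2⟩)
          · obtain ⟨e₀, ⟨he₀P, he₀v⟩, hu₀⟩ := hPM.2 v ((hV v).2 (Or.inl hv))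
            have h1 : e₀ ≠ s1 := by
              rintro rfl
              rcases (hs1 v).1 he₀v with rfl | rfl
              · exact hvx rfl
              · exact huG hv
            have h2 : e₀ ≠ s2 := by
              rintro rfl
              rcases (hs2 v).1 he₀v with rfl | rfl
              · exact hvy rfl
              · exact hwG hv
            refine ⟨e₀, ⟨Finset.mem_insert_of_mem (hQmem e₀ he₀P h1 h2), he₀v⟩, ?_⟩
            intro e ⟨heP, hev⟩
            rcases Finset.mem_insert.1 heP with rfl | he
            · exfalso
              rcases (hen v).1 hev with rfl | rfl
              · exact hvx rfl
              · exact hvy rfl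
            · exact hu₀ e ⟨(hQsub e he).1, hev⟩
      · have h1 : a ≠ en := by
          rintro rfl
          exact henP haP
        exact Finset.mem_insert_of_mem (hQmem a haP has1 has2)
      · intro e he hea
        rcases Finset.mem_insert.1 he with rfl | he
        · exact ⟨henE, henI⟩
        · obtain ⟨h1, h2, h3⟩ := hQsub e he
          have hb := hBP e h1 hea
          refine ⟨hPsub e h1 h2 h3, fun hint => hb.2 ((hInt e).2 (Or.inl hint))⟩
      
    have hPP₀ : insert en Q = P₀ := huniq₀ _ hP'
    have henP₀ : en ∈ P₀ := hPP₀ ▸ Finset.mem_insert_self _ _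
    have hane : a ≠ en := by
      rintro rfl
      exact henP haP
    refine ⟨?_, henP₀, hane⟩
    have henQ : en ∉ Q := fun h => henP (hQsub en h).1
    have : P₀.erase en = Q := by
      rw [← hPP₀, Finset.erase_insert henQ]
    rw [this, hQ]
    rw [Finset.insert_erase (Finset.mem_erase.2 ⟨hs1s2.symm, hs2P⟩), Finset.insert_erase hs1P]

  -- EXISTENCE LEMMAS
  have goodA : (en ∈ P₀ → a = en) →
      G.IsPerfectMatching (insert far P₀) ∧ a ∈ insert far P₀ ∧
      ∀ e ∈ insert far P₀, e ≠ a → G.IsBoundaryEdge e := by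
    intro hc
    refine ⟨⟨?_, ?_⟩, Finset.mem_insert_of_mem haP₀, ?_⟩
    · intro e he
      rcases Finset.mem_insert.1 he with rfl | he
      · exact hfarEG
      · exact (hE e).2 (Or.inl (hP₀E e he))
    · intro v hv
      by_cases hv' : v ∈ G'.verts
      · obtain ⟨e₀, ⟨he₀P, he₀v⟩, hu₀⟩ := hPM₀.2 v hv'
        refine ⟨e₀, ⟨Finset.mem_insert_of_mem he₀P, he₀v⟩, ?_⟩
        intro e ⟨heP, hev⟩
        rcases Finset.mem_insert.1 heP with rfl | he
        · exfalso
          rcases (hfar v).1 hev with rfl | rfl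
          · exact huG hv'
          · exact hwG hv'
        · exact hu₀ e ⟨he, hev⟩
      · have hvt : v ∈ tileVerts p := ((hV v).1 hv).resolve_left hv'
        have hvuw : v = u ∨ v = w := by
          rcases (hTV v).1 hvt with rfl | rfl | rfl | rfl
          · exact absurd hxV hv'
          · exact absurd hyV hv'
          · exact Or.inl rfl
          · exact Or.inr rfl
        have hvfar : v ∈ Edge.ends far := (hfar v).2 hvuw
        refine ⟨far, ⟨Finset.mem_insert_self _ _, hvfar⟩, ?_⟩
        intro e ⟨heP, hev⟩
        rcases Finset.mem_insert.1 heP with rfl | he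
        · rfl
        · exfalso
          rcases hvuw with rfl | rfl
          · exact huG (hcovG' e he v hev)
          · exact hwG (hcovG' e he v hev)
    · intro e he hea
      rcases Finset.mem_insert.1 he with rfl | he
      · exact hfarB
      · by_cases hee : e = en
        · exact absurd (hc (hee ▸ he)).symm (hee ▸ hea)
        · have hb := hB₀ e he hea
          exact ⟨(hE e).2 (Or.inl hb.1), fun hint =>
            (((hInt e).1 hint).elim hb.2 hee)⟩
  have goodB : en ∈ P₀ → a ≠ en →
      G.IsPerfectMatching (insert s1 (insert s2 (P₀.erase en))) ∧
      a ∈ insert s1 (insert s2 (P₀.erase en)) ∧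
      ∀ e ∈ insert s1 (insert s2 (P₀.erase en)), e ≠ a → G.IsBoundaryEdge e := by
    intro hc1 hc2
    have hmemQ : ∀ e, e ∈ insert s1 (insert s2 (P₀.erase en)) ↔
        e = s1 ∨ e = s2 ∨ (e ∈ P₀ ∧ e ≠ en) := by
      intro e
      simp only [Finset.mem_insert, Finset.mem_erase]
      constructor
      · rintro (rfl | rfl | ⟨h1, h2⟩)
        · exact Or.inl rfl
        · exact Or.inr (Or.inl rfl)
        · exact Or.inr (Or.inr ⟨h2, h1⟩)
      · rintro (rfl | rfl | ⟨h1, h2⟩)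
        · exact Or.inl rfl
        · exact Or.inr (Or.inl rfl)
        · exact Or.inr (Or.inr ⟨h2, h1⟩)
    refine ⟨⟨?_, ?_⟩, ?_, ?_⟩
    · intro e he
      rcases (hmemQ e).1 he with rfl | rfl | ⟨he, _⟩
      · exact hs1EG
      · exact hs2EG
      · exact (hE e).2 (Or.inl (hP₀E e he))
    · intro v hv
      by_cases hvx : v = x
      · subst hvx
        refine ⟨s1, ⟨(hmemQ s1).2 (Or.inl rfl), hxs1⟩, ?_⟩
        intro e ⟨heP, hev⟩
        rcases (hmemQ e).1 heP with rfl | rfl | ⟨he, hne⟩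
        · rfl
        · exact absurd ((hs2 v).1 hev) (fun h => h.elim (fun h' => hxy h') (fun h' => hxw h'))
        · exact absurd ((hPM₀.2 v hxV).unique ⟨he, hev⟩ ⟨hc1, hxen⟩) hne
      · by_cases hvy : v = y
        · subst hvy
          refine ⟨s2, ⟨(hmemQ s2).2 (Or.inr (Or.inl rfl)), hys2⟩, ?_⟩
          intro e ⟨heP, hev⟩
          rcases (hmemQ e).1 heP with rfl | rfl | ⟨he, hne⟩
          · exact absurd ((hs1 v).1 hev) (fun h => h.elim (fun h' => hxy h'.symm) (fun h' => hyu h'))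
          · rfl
          · exact absurd ((hPM₀.2 v hyV).unique ⟨he, hev⟩ ⟨hc1, hyen⟩) hne
        · by_cases hvu : v = u
          · subst hvu
            refine ⟨s1, ⟨(hmemQ s1).2 (Or.inl rfl), hus1⟩, ?_⟩
            intro e ⟨heP, hev⟩
            rcases (hmemQ e).1 heP with rfl | rfl | ⟨he, _⟩
            · rfl
            · exact absurd ((hs2 v).1 hev) (fun h => h.elim (fun h' => hyu h'.symm) (fun h' => huw h'))
            · exact absurd (hcovG' e he v hev) huG
          · by_cases hvw : v = w
            · subst hvw
              refine ⟨s2, ⟨(hmemQ s2).2 (Or.inr (Or.inl rfl)), hws2⟩, ?_⟩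
              intro e ⟨heP, hev⟩
              rcases (hmemQ e).1 heP with rfl | rfl | ⟨he, _⟩
              · exact absurd ((hs1 v).1 hev) (fun h => h.elim (fun h' => hxw h'.symm) (fun h' => huw h'.symm))
              · rfl
              · exact absurd (hcovG' e he v hev) hwG
            · have hv' : v ∈ G'.verts := by
                rcases (hV v).1 hv with h | h
                · exact h
                · exfalso
                  rcases (hTV v).1 h with rfl | rfl | rfl | rfl
                  · exact hvx rfl
                  · exact hvy rfl
                  · exact hvu rfl
                  · exact hvw rfl
              obtain ⟨e₀, ⟨he₀P, he₀v⟩, hu₀⟩ := hPM₀.2 v hv'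
              have he₀en : e₀ ≠ en := by
                rintro rfl
                rcases (hen v).1 he₀v with rfl | rfl
                · exact hvx rfl
                · exact hvy rfl
              refine ⟨e₀, ⟨(hmemQ e₀).2 (Or.inr (Or.inr ⟨he₀P, he₀en⟩)), he₀v⟩, ?_⟩
              intro e ⟨heP, hev⟩
              rcases (hmemQ e).1 heP with rfl | rfl | ⟨he, _⟩
              · exfalso
                rcases (hs1 v).1 hev with rfl | rfl
                · exact hvx rfl
                · exact hvu rfl
              · exfalso
                rcases (hs2 v).1 hev with rfl | rfl
                · exact hvy rfl
                · exact hvw rfl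
              · exact hu₀ e ⟨he, hev⟩
    · exact (hmemQ a).2 (Or.inr (Or.inr ⟨haP₀, hc2⟩))
    · intro e he hea
      rcases (hmemQ e).1 he with rfl | rfl | ⟨he, hne⟩
      · exact hs1B
      · exact hs2B
      · have hb := hB₀ e he hea
        exact ⟨(hE e).2 (Or.inl hb.1), fun hint =>
          (((hInt e).1 hint).elim hb.2 hne)⟩
  -- FINAL ASSEMBLY
  by_cases hc : en ∈ P₀ ∧ a ≠ en
  · refine ⟨insert s1 (insert s2 (P₀.erase en)), goodB hc.1 hc.2, ?_⟩
    intro P hgood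
    by_cases hfc : far ∈ P
    · exfalso
      exact hc.2 ((caseFar P hgood hfc).2 hc.1)
    · exact (caseSide P hgood hfc).1
  · refine ⟨insert far P₀, goodA (fun h1 => by_contra fun h2 => hc ⟨h1, h2⟩), ?_⟩
    intro P hgood
    by_cases hfc : far ∈ P
    · exact (caseFar P hgood hfc).1
    · exact absurd ⟨(caseSide P hgood hfc).2.1, (caseSide P hgood hfc).2.2⟩ hc

end SnakeSol

namespace SnakeSol
open SnakeGraph

lemma tile_case (G : SnakeGraph) (en s1 s2 far : Edge) (x y u w : Pt)
    (hEa : ∀ e ∈ G.edges, e = en ∨ e = s1 ∨ e = s2 ∨ e = far)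
    (hVa : ∀ v ∈ G.verts, v = x ∨ v = y ∨ v = u ∨ v = w)
    (hInt : ∀ e, ¬ G.IsInteriorEdge e)
    (henE : en ∈ G.edges) (hfarE : far ∈ G.edges)
    (hxV : x ∈ G.verts) (hyV : y ∈ G.verts) (huV : u ∈ G.verts)
    (hen : ∀ v, v ∈ Edge.ends en ↔ v = x ∨ v = y)
    (hs1 : ∀ v, v ∈ Edge.ends s1 ↔ v = x ∨ v = u)
    (hs2 : ∀ v, v ∈ Edge.ends s2 ↔ v = y ∨ v = w)
    (hfar : ∀ v, v ∈ Edge.ends far ↔ v = u ∨ v = w)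
    (hxy : x ≠ y) (hxu : x ≠ u) (hxw : x ≠ w) (hyu : y ≠ u) (hyw : y ≠ w) (huw : u ≠ w) :
    ∃! P : Finset Edge, G.IsPerfectMatching P ∧ en ∈ P ∧
      ∀ e ∈ P, e ≠ en → G.IsBoundaryEdge e := by
  classical
  have hxen : x ∈ Edge.ends en := (hen x).2 (Or.inl rfl)
  have hyen : y ∈ Edge.ends en := (hen y).2 (Or.inr rfl)
  have hxs1 : x ∈ Edge.ends s1 := (hs1 x).2 (Or.inl rfl)
  have hys2 : y ∈ Edge.ends s2 := (hs2 y).2 (Or.inl rfl)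
  have hufar : u ∈ Edge.ends far := (hfar u).2 (Or.inl rfl)
  have hens1 : en ≠ s1 := by
    intro h; rw [h] at hyen
    rcases (hs1 y).1 hyen with h'|h'
    · exact hxy h'.symm
    · exact hyu h'
  have hens2 : en ≠ s2 := by
    intro h; rw [h] at hxen
    rcases (hs2 x).1 hxen with h'|h'
    · exact hxy h'
    · exact hxw h'
  refine ⟨{en, far}, ⟨⟨?_, ?_⟩, ?_, ?_⟩, ?_⟩
  · intro e he
    rcases Finset.mem_insert.1 he with rfl | he
    · exact henE
    · rw [Finset.mem_singleton.1 he]; exact hfarE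
  · intro v hv
    rcases hVa v hv with rfl | rfl | rfl | rfl
    · refine ⟨en, ⟨Finset.mem_insert_self _ _, hxen⟩, ?_⟩
      rintro e ⟨heP, hev⟩
      rcases Finset.mem_insert.1 heP with rfl | heP
      · rfl
      · rw [Finset.mem_singleton.1 heP] at hev ⊢
        exfalso
        rcases (hfar v).1 hev with h|h
        · exact hxu h
        · exact hxw h
    · refine ⟨en, ⟨Finset.mem_insert_self _ _, hyen⟩, ?_⟩
      rintro e ⟨heP, hev⟩
      rcases Finset.mem_insert.1 heP with rfl | heP
      · rfl
      · rw [Finset.mem_singleton.1 heP] at hev ⊢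
        exfalso
        rcases (hfar v).1 hev with h|h
        · exact hyu h
        · exact hyw h
    · refine ⟨far, ⟨Finset.mem_insert_of_mem (Finset.mem_singleton_self _), hufar⟩, ?_⟩
      rintro e ⟨heP, hev⟩
      rcases Finset.mem_insert.1 heP with rfl | heP
      · exfalso
        rcases (hen v).1 hev with h|h
        · exact hxu h.symm
        · exact hyu h.symm
      · exact Finset.mem_singleton.1 heP
    · refine ⟨far, ⟨Finset.mem_insert_of_mem (Finset.mem_singleton_self _), (hfar v).2 (Or.inr rfl)⟩, ?_⟩
      rintro e ⟨heP, hev⟩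
      rcases Finset.mem_insert.1 heP with rfl | heP
      · exfalso
        rcases (hen v).1 hev with h|h
        · exact hxw h.symm
        · exact hyw h.symm
      · exact Finset.mem_singleton.1 heP
  · exact Finset.mem_insert_self _ _
  · intro e he _
    refine ⟨?_, hInt e⟩
    rcases Finset.mem_insert.1 he with rfl | he
    · exact henE
    · rw [Finset.mem_singleton.1 he]; exact hfarE
  · rintro P ⟨hPM, henP, _⟩
    have hs1P : s1 ∉ P := by
      intro h
      exact hens1 (((hPM.2 x hxV).unique ⟨h, hxs1⟩ ⟨henP, hxen⟩).symm)
    have hs2P : s2 ∉ P := by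
      intro h
      exact hens2 (((hPM.2 y hyV).unique ⟨h, hys2⟩ ⟨henP, hyen⟩).symm)
    have hfarP : far ∈ P := by
      obtain ⟨e₀, ⟨he₀P, he₀v⟩, _⟩ := hPM.2 u huV
      rcases hEa e₀ (hPM.1 e₀ he₀P) with h | h | h | h
      · exfalso
        rw [h] at he₀v
        rcases (hen u).1 he₀v with h'|h'
        · exact hxu h'.symm
        · exact hyu h'.symm
      · rw [h] at he₀P; exact absurd he₀P hs1P
      · exfalso
        rw [h] at he₀v
        rcases (hs2 u).1 he₀v with h'|h'
        · exact hyu h'.symm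
        · exact huw h'
      · rw [h] at he₀P; exact he₀P
    apply Finset.ext
    intro e
    simp only [Finset.mem_insert, Finset.mem_singleton]
    constructor
    · intro he
      rcases hEa e (hPM.1 e he) with h | h | h | h
      · exact Or.inl h
      · rw [h] at he; exact absurd he hs1P
      · rw [h] at he; exact absurd he hs2P
      · exact Or.inr h
    · rintro (rfl | rfl)
      · exact henP
      · exact hfarP

lemma endsS (t v : Pt) : v ∈ Edge.ends (t, true) ↔ v = t ∨ v = t + ((1:ℤ),(0:ℤ)) := by
  simp [Edge.ends]

lemma endsN (t v : Pt) :
    v ∈ Edge.ends (t + ((0:ℤ),(1:ℤ)), true) ↔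
      v = t + ((0:ℤ),(1:ℤ)) ∨ v = t + ((1:ℤ),(1:ℤ)) := by
  simp only [Edge.ends, if_pos, Finset.mem_insert, Finset.mem_singleton, Prod.ext_iff,
    Prod.fst_add, Prod.snd_add]
  constructor
  · rintro (h | h)
    · exact Or.inl ⟨by omega, by omega⟩
    · exact Or.inr ⟨by simp at h ⊢ <;> omega, by simp at h ⊢ <;> omega⟩
  · rintro (h | h)
    · exact Or.inl ⟨by omega, by omega⟩
    · exact Or.inr ⟨by simp at h ⊢ <;> omega, by simp at h ⊢ <;> omega⟩

lemma endsW (t v : Pt) : v ∈ Edge.ends (t, false) ↔ v = t ∨ v = t + ((0:ℤ),(1:ℤ)) := by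
  simp [Edge.ends]

lemma endsE (t v : Pt) :
    v ∈ Edge.ends (t + ((1:ℤ),(0:ℤ)), false) ↔
      v = t + ((1:ℤ),(0:ℤ)) ∨ v = t + ((1:ℤ),(1:ℤ)) := by
  simp only [Edge.ends, Finset.mem_insert, Finset.mem_singleton, Prod.ext_iff,
    Prod.fst_add, Prod.snd_add]
  constructor
  · rintro (h | h)
    · exact Or.inl ⟨by omega, by omega⟩
    · exact Or.inr ⟨by simp at h ⊢ <;> omega, by simp at h ⊢ <;> omega⟩
  · rintro (h | h)
    · exact Or.inl ⟨by omega, by omega⟩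
    · exact Or.inr ⟨by simp at h ⊢ <;> omega, by simp at h ⊢ <;> omega⟩

end SnakeSol

namespace SnakeSol
open SnakeGraph

lemma pt_ne_add (t : Pt) {c : Pt} (h : ¬(c.1 = 0 ∧ c.2 = 0)) : t ≠ t + c := by
  intro hc
  have h0 : c = 0 := by
    have := (add_eq_left).1 hc.symm
    exact this
  rw [h0] at h
  exact h ⟨rfl, rfl⟩

lemma pt_add_ne (t : Pt) {c d : Pt} (h : ¬(c.1 = d.1 ∧ c.2 = d.2)) : t + c ≠ t + d := by
  intro hcd
  have h0 : c = d := add_left_cancel hcd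
  rw [h0] at h
  exact h ⟨rfl, rfl⟩

lemma base_case (G : SnakeGraph) (hd : G.d = 1) (a : Edge)
    (ha : a ∈ tileEdges (G.pos 1)) :
    ∃! P : Finset Edge, G.IsPerfectMatching P ∧ a ∈ P ∧
      ∀ e ∈ P, e ≠ a → G.IsBoundaryEdge e := by
  classical
  set t := G.pos 1 with ht
  have hInt : ∀ e, ¬ G.IsInteriorEdge e := by
    rintro e ⟨i, h1, h2, _⟩
    rw [hd] at h2
    omega
  have hEa : ∀ e ∈ G.edges, e ∈ tileEdges t := by
    intro e he
    obtain ⟨i, h1, h2, h3⟩ := mem_edges.1 he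
    rw [hd] at h2
    have : i = 1 := le_antisymm h2 h1
    rwa [this] at h3
  have hVa : ∀ v ∈ G.verts, v ∈ tileVerts t := by
    intro v hv
    obtain ⟨i, h1, h2, h3⟩ := mem_verts.1 hv
    rw [hd] at h2
    have : i = 1 := le_antisymm h2 h1
    rwa [this] at h3
  have hEm : ∀ e ∈ tileEdges t, e ∈ G.edges := by
    intro e he
    exact mem_edges.2 ⟨1, le_refl 1, by rw [hd], he⟩
  have hVm : ∀ v ∈ tileVerts t, v ∈ G.verts := by
    intro v hv
    exact mem_verts.2 ⟨1, le_refl 1, by rw [hd], hv⟩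
  -- the four points
  have n10 : t ≠ t + ((1:ℤ),(0:ℤ)) := pt_ne_add t (by simp)
  have n01 : t ≠ t + ((0:ℤ),(1:ℤ)) := pt_ne_add t (by simp)
  have n11 : t ≠ t + ((1:ℤ),(1:ℤ)) := pt_ne_add t (by simp)
  have n10_01 : t + ((1:ℤ),(0:ℤ)) ≠ t + ((0:ℤ),(1:ℤ)) := pt_add_ne t (by simp)
  have n10_11 : t + ((1:ℤ),(0:ℤ)) ≠ t + ((1:ℤ),(1:ℤ)) := pt_add_ne t (by simp)
  have n01_11 : t + ((0:ℤ),(1:ℤ)) ≠ t + ((1:ℤ),(1:ℤ)) := pt_add_ne t (by simp)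
  -- edge memberships
  have hS : (t, true) ∈ G.edges := hEm _ ((mem_tileEdges t _).2 (Or.inl rfl))
  have hN : (t + ((0:ℤ),(1:ℤ)), true) ∈ G.edges :=
    hEm _ ((mem_tileEdges t _).2 (Or.inr (Or.inl rfl)))
  have hW : (t, false) ∈ G.edges := hEm _ ((mem_tileEdges t _).2 (Or.inr (Or.inr (Or.inl rfl))))
  have hEe : (t + ((1:ℤ),(0:ℤ)), false) ∈ G.edges :=
    hEm _ ((mem_tileEdges t _).2 (Or.inr (Or.inr (Or.inr rfl))))
  have hv00 : t ∈ G.verts := hVm _ ((mem_tileVerts t _).2 (Or.inl rfl))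
  have hv10 : t + ((1:ℤ),(0:ℤ)) ∈ G.verts := hVm _ ((mem_tileVerts t _).2 (Or.inr (Or.inl rfl)))
  have hv01 : t + ((0:ℤ),(1:ℤ)) ∈ G.verts :=
    hVm _ ((mem_tileVerts t _).2 (Or.inr (Or.inr (Or.inl rfl))))
  have hv11 : t + ((1:ℤ),(1:ℤ)) ∈ G.verts :=
    hVm _ ((mem_tileVerts t _).2 (Or.inr (Or.inr (Or.inr rfl))))
  rcases (mem_tileEdges t a).1 ha with h | h | h | h
  · -- a = south edge
    rw [h]
    refine tile_case G (t, true) (t, false) (t + ((1:ℤ),(0:ℤ)), false) (t + ((0:ℤ),(1:ℤ)), true)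
      t (t + ((1:ℤ),(0:ℤ))) (t + ((0:ℤ),(1:ℤ))) (t + ((1:ℤ),(1:ℤ))) ?_ ?_ hInt hS hN
      hv00 hv10 hv01 (endsS t) (endsW t) (endsE t) (endsN t)
      n10 n01 n11 n10_01 n10_11 n01_11
    · intro e he
      rcases (mem_tileEdges t e).1 (hEa e he) with h' | h' | h' | h'
      · exact Or.inl h'
      · exact Or.inr (Or.inr (Or.inr h'))
      · exact Or.inr (Or.inl h')
      · exact Or.inr (Or.inr (Or.inl h'))
    · intro v hv
      rcases (mem_tileVerts t v).1 (hVa v hv) with h' | h' | h' | h'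
      · exact Or.inl h'
      · exact Or.inr (Or.inl h')
      · exact Or.inr (Or.inr (Or.inl h'))
      · exact Or.inr (Or.inr (Or.inr h'))
  · -- a = north edge
    rw [h]
    refine tile_case G (t + ((0:ℤ),(1:ℤ)), true) (t, false) (t + ((1:ℤ),(0:ℤ)), false) (t, true)
      (t + ((0:ℤ),(1:ℤ))) (t + ((1:ℤ),(1:ℤ))) t (t + ((1:ℤ),(0:ℤ))) ?_ ?_ hInt hN hS
      hv01 hv11 hv00 (endsN t) (fun v => (endsW t v).trans or_comm)
      (fun v => (endsE t v).trans or_comm) (endsS t)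
      n01_11 n01.symm n10_01.symm n11.symm n10_11.symm n10
    · intro e he
      rcases (mem_tileEdges t e).1 (hEa e he) with h' | h' | h' | h'
      · exact Or.inr (Or.inr (Or.inr h'))
      · exact Or.inl h'
      · exact Or.inr (Or.inl h')
      · exact Or.inr (Or.inr (Or.inl h'))
    · intro v hv
      rcases (mem_tileVerts t v).1 (hVa v hv) with h' | h' | h' | h'
      · exact Or.inr (Or.inr (Or.inl h'))
      · exact Or.inr (Or.inr (Or.inr h'))
      · exact Or.inl h'
      · exact Or.inr (Or.inl h')
  · -- a = west edge
    rw [h]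
    refine tile_case G (t, false) (t, true) (t + ((0:ℤ),(1:ℤ)), true) (t + ((1:ℤ),(0:ℤ)), false)
      t (t + ((0:ℤ),(1:ℤ))) (t + ((1:ℤ),(0:ℤ))) (t + ((1:ℤ),(1:ℤ))) ?_ ?_ hInt hW hEe
      hv00 hv01 hv10 (endsW t) (endsS t) (endsN t) (endsE t)
      n01 n10 n11 n10_01.symm n01_11 n10_11
    · intro e he
      rcases (mem_tileEdges t e).1 (hEa e he) with h' | h' | h' | h'
      · exact Or.inr (Or.inl h')
      · exact Or.inr (Or.inr (Or.inl h'))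
      · exact Or.inl h'
      · exact Or.inr (Or.inr (Or.inr h'))
    · intro v hv
      rcases (mem_tileVerts t v).1 (hVa v hv) with h' | h' | h' | h'
      · exact Or.inl h'
      · exact Or.inr (Or.inr (Or.inl h'))
      · exact Or.inr (Or.inl h')
      · exact Or.inr (Or.inr (Or.inr h'))
  · -- a = east edge
    rw [h]
    refine tile_case G (t + ((1:ℤ),(0:ℤ)), false) (t, true) (t + ((0:ℤ),(1:ℤ)), true) (t, false)
      (t + ((1:ℤ),(0:ℤ))) (t + ((1:ℤ),(1:ℤ))) t (t + ((0:ℤ),(1:ℤ))) ?_ ?_ hInt hEe hW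
      hv10 hv11 hv00 (endsE t) (fun v => (endsS t v).trans or_comm)
      (fun v => (endsN t v).trans or_comm) (endsW t)
      n10_11 n10.symm n10_01 n11.symm n01_11.symm n01
    · intro e he
      rcases (mem_tileEdges t e).1 (hEa e he) with h' | h' | h' | h'
      · exact Or.inr (Or.inl h')
      · exact Or.inr (Or.inr (Or.inl h'))
      · exact Or.inr (Or.inr (Or.inr h'))
      · exact Or.inl h'
    · intro v hv
      rcases (mem_tileVerts t v).1 (hVa v hv) with h' | h' | h' | h'
      · exact Or.inr (Or.inr (Or.inl h'))
      · exact Or.inl h'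
      · exact Or.inr (Or.inr (Or.inr h'))
      · exact Or.inr (Or.inl h')

end SnakeSol

namespace SnakeSol
open SnakeGraph

lemma notMem_edges_high (G' : SnakeGraph) (e : Edge)
    (hv : lv G'.base + G'.d + 1 ≤ lv e.1) : e ∉ G'.edges := by
  intro h
  obtain ⟨i, h1, h2, h3⟩ := mem_edges.1 h
  have hl := lv_pos G' i h1
  rcases tileEdges_lv h3 with h' | h' <;> rw [hl] at h' <;> omega

lemma notMem_verts_high (G' : SnakeGraph) (v : Pt)
    (hv : lv G'.base + G'.d + 2 ≤ lv v) : v ∉ G'.verts := by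
  intro h
  obtain ⟨i, h1, h2, h3⟩ := mem_verts.1 h
  have hl := lv_pos G' i h1
  rcases tileVerts_lv h3 with h' | h' | h' <;> rw [hl] at h' <;> omega

lemma not_interior_high (G' : SnakeGraph) (e : Edge)
    (hv : lv G'.base + G'.d ≤ lv e.1) : ¬ G'.IsInteriorEdge e := by
  rintro ⟨i, h1, h2, rfl⟩
  rw [intEdge_lv, lv_pos G' i h1] at hv
  omega

lemma lv10 : lv ((1:ℤ),(0:ℤ)) = 1 := by norm_num [lv]
lemma lv01 : lv ((0:ℤ),(1:ℤ)) = 1 := by norm_num [lv]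
lemma lv11 : lv ((1:ℤ),(1:ℤ)) = 2 := by norm_num [lv]

lemma step_case (n : ℕ) (hn : 1 ≤ n) (base : Pt) (step : ℕ → Bool) (a : Edge)
    (ha : a ∈ tileEdges base)
    (IH : ∃! P : Finset Edge,
      (⟨n, hn, base, step⟩ : SnakeGraph).IsPerfectMatching P ∧ a ∈ P ∧
      ∀ e ∈ P, e ≠ a → (⟨n, hn, base, step⟩ : SnakeGraph).IsBoundaryEdge e) :
    ∃! P : Finset Edge,
      (⟨n+1, by omega, base, step⟩ : SnakeGraph).IsPerfectMatching P ∧ a ∈ P ∧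
      ∀ e ∈ P, e ≠ a → (⟨n+1, by omega, base, step⟩ : SnakeGraph).IsBoundaryEdge e := by
  classical
  set G : SnakeGraph := ⟨n+1, by omega, base, step⟩ with hG
  set G' : SnakeGraph := ⟨n, hn, base, step⟩ with hG'
  set q : Pt := G'.pos n with hqdef
  set p : Pt := G'.pos (n+1) with hpdef
  have hGd : G.d = n + 1 := rfl
  have hG'd : G'.d = n := rfl
  have hG'b : G'.base = base := rfl
  have hqlv : lv q = lv base + n - 1 := by
    rw [hqdef]
    have := lv_pos G' n hn
    rwa [hG'b] at this
  -- decomposition of edges / verts / interior edges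
  have hE : ∀ e, e ∈ G.edges ↔ e ∈ G'.edges ∨ e ∈ tileEdges p := by
    intro e
    constructor
    · intro he
      obtain ⟨i, h1, h2, h3⟩ := mem_edges.1 he
      have h2' : i ≤ n + 1 := h2
      by_cases hin : i ≤ n
      · exact Or.inl (mem_edges.2 ⟨i, h1, hin, h3⟩)
      · have hi : i = n + 1 := by omega
        subst hi
        exact Or.inr h3
    · rintro (he | he)
      · obtain ⟨i, h1, h2, h3⟩ := mem_edges.1 he
        have h2' : i ≤ n := h2
        exact mem_edges.2 ⟨i, h1, by omega, h3⟩
      · exact mem_edges.2 ⟨n+1, by omega, le_refl _, he⟩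
  have hV : ∀ v, v ∈ G.verts ↔ v ∈ G'.verts ∨ v ∈ tileVerts p := by
    intro v
    constructor
    · intro hv
      obtain ⟨i, h1, h2, h3⟩ := mem_verts.1 hv
      have h2' : i ≤ n + 1 := h2
      by_cases hin : i ≤ n
      · exact Or.inl (mem_verts.2 ⟨i, h1, hin, h3⟩)
      · have hi : i = n + 1 := by omega
        subst hi
        exact Or.inr h3
    · rintro (hv | hv)
      · obtain ⟨i, h1, h2, h3⟩ := mem_verts.1 hv
        have h2' : i ≤ n := h2
        exact mem_verts.2 ⟨i, h1, by omega, h3⟩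
      · exact mem_verts.2 ⟨n+1, by omega, le_refl _, hv⟩
  have hInt0 : ∀ e, G.IsInteriorEdge e ↔ G'.IsInteriorEdge e ∨ e = G'.intEdge n := by
    intro e
    constructor
    · rintro ⟨i, h1, h2, h3⟩
      have h2' : i < n + 1 := h2
      by_cases hin : i < n
      · exact Or.inl ⟨i, h1, hin, h3⟩
      · have hi : i = n := by omega
        subst hi
        exact Or.inr h3
    · rintro (⟨i, h1, h2, h3⟩ | h)
      · have h2' : i < n := h2
        exact ⟨i, h1, by omega, h3⟩
      · exact ⟨n, hn, by omega, h⟩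
  -- point distinctions around p
  have n10 : p ≠ p + ((1:ℤ),(0:ℤ)) := pt_ne_add p (by simp)
  have n01 : p ≠ p + ((0:ℤ),(1:ℤ)) := pt_ne_add p (by simp)
  have n11 : p ≠ p + ((1:ℤ),(1:ℤ)) := pt_ne_add p (by simp)
  have n10_01 : p + ((1:ℤ),(0:ℤ)) ≠ p + ((0:ℤ),(1:ℤ)) := pt_add_ne p (by simp)
  have n10_11 : p + ((1:ℤ),(0:ℤ)) ≠ p + ((1:ℤ),(1:ℤ)) := pt_add_ne p (by simp)
  have n01_11 : p + ((0:ℤ),(1:ℤ)) ≠ p + ((1:ℤ),(1:ℤ)) := pt_add_ne p (by simp)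
  -- level of a
  have hlva : lv a.1 ≤ lv base + 1 ∧ lv base ≤ lv a.1 := by
    rcases (mem_tileEdges base a).1 ha with h|h|h|h <;> rw [h] <;>
      constructor <;> (simp [lv, Prod.fst_add, Prod.snd_add]; try omega)
  by_cases hstep : step n = true
  · -- EAST step
    have hp : p = q + ((1:ℤ),(0:ℤ)) := by
      rw [hpdef, pos_succ G' n hn]
      have hs : G'.step n = true := hstep
      rw [hs, if_pos rfl, hqdef]
    have hplv : lv p = lv base + n := by rw [hp, lv_add, lv10]; omega
    have hintn : G'.intEdge n = ((p, false) : Edge) := by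
      have hs : G'.step n = true := hstep
      rw [SnakeGraph.intEdge, hs, if_pos rfl]
      rw [eastEdge, hp, hqdef]
    have hlvu : lv (p + ((1:ℤ),(0:ℤ))) = lv base + n + 1 := by rw [lv_add, lv10]; omega
    have hlvw : lv (p + ((1:ℤ),(1:ℤ))) = lv base + n + 2 := by rw [lv_add, lv11]; omega
    have hlvy : lv (p + ((0:ℤ),(1:ℤ))) = lv base + n + 1 := by rw [lv_add, lv01]; omega
    refine step_lemma G G' a (p, false) (p, true) (p + ((0:ℤ),(1:ℤ)), true)
      (p + ((1:ℤ),(0:ℤ)), false) p p (p + ((0:ℤ),(1:ℤ))) (p + ((1:ℤ),(0:ℤ)))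
      (p + ((1:ℤ),(1:ℤ))) hE hV ?_ ?_ ?_ (endsW p) (endsS p) (endsN p) (endsE p)
      n01 n10 n11 n10_01.symm n01_11 n10_11 ?_ ?_ ?_ ?_ ?_ ?_ ?_ ?_ ?_ ?_ IH
    · intro e
      rw [hInt0, hintn]
    · intro e
      rw [mem_tileEdges]
      constructor
      · rintro (h|h|h|h)
        · exact Or.inr (Or.inl h)
        · exact Or.inr (Or.inr (Or.inl h))
        · exact Or.inl h
        · exact Or.inr (Or.inr (Or.inr h))
      · rintro (h|h|h|h)
        · exact Or.inr (Or.inr (Or.inl h))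
        · exact Or.inl h
        · exact Or.inr (Or.inl h)
        · exact Or.inr (Or.inr (Or.inr h))
    · intro v
      rw [mem_tileVerts]
      constructor
      · rintro (h|h|h|h)
        · exact Or.inl h
        · exact Or.inr (Or.inr (Or.inl h))
        · exact Or.inr (Or.inl h)
        · exact Or.inr (Or.inr (Or.inr h))
      · rintro (h|h|h|h)
        · exact Or.inl h
        · exact Or.inr (Or.inr (Or.inl h))
        · exact Or.inr (Or.inl h)
        · exact Or.inr (Or.inr (Or.inr h))
    · -- u ∉ G'.verts
      intro hmem
      obtain ⟨i, h1, h2, h3⟩ := mem_verts.1 hmem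
      have h2' : i ≤ n := h2
      have hl := lv_pos G' i h1
      rw [hG'b] at hl
      have hc2 : lv (p + ((1:ℤ),(0:ℤ))) = lv (G'.pos i) + 2 := by
        rcases tileVerts_lv h3 with h'|h'|h' <;> omega
      have hi : i = n := by omega
      subst hi
      have htop := tileVerts_top h3 hc2
      rw [hp, add_assoc] at htop
      have := add_left_cancel htop
      simp [Prod.ext_iff] at this
    · -- w ∉ G'.verts
      exact notMem_verts_high G' _ (by rw [hG'b, hG'd]; omega)
    · -- en ∈ G'.edges
      refine mem_edges.2 ⟨n, hn, le_refl _, ?_⟩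
      rw [← hqdef, hp]
      exact (mem_tileEdges q _).2 (Or.inr (Or.inr (Or.inr rfl)))
    · -- en not interior in G'
      exact not_interior_high G' _ (by rw [hG'b, hG'd]; show lv base + (n:ℤ) ≤ lv p; omega)
    · -- s1 ∉ G'.edges
      intro hmem
      obtain ⟨i, h1, h2, h3⟩ := mem_edges.1 hmem
      have h2' : i ≤ n := h2
      have hl := lv_pos G' i h1
      rw [hG'b] at hl
      have hfst : ((p, true) : Edge).1 = p := rfl
      have hc1 : lv ((p, true) : Edge).1 = lv (G'.pos i) + 1 := by
        rcases tileEdges_lv h3 with h'|h' <;> rw [hfst] at h' ⊢ <;> omega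
      have hi : i = n := by rw [hfst] at hc1; omega
      subst hi
      rcases tileEdges_top h3 hc1 with he|he
      · have hfe : p = q + ((0:ℤ),(1:ℤ)) := by
          have := congrArg Prod.fst he
          simpa [hqdef] using this
        rw [hp] at hfe
        have := add_left_cancel hfe
        simp [Prod.ext_iff] at this
      · have := congrArg Prod.snd he
        simp at this
    · -- s2 ∉ G'.edges
      exact notMem_edges_high G' _ (by rw [hG'b, hG'd]; show _ ≤ lv (p + ((0:ℤ),(1:ℤ))); omega)
    · -- far ∉ G'.edges
      exact notMem_edges_high G' _ (by rw [hG'b, hG'd]; show _ ≤ lv (p + ((1:ℤ),(0:ℤ))); omega)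
    · -- a ≠ s1
      intro h
      have hl1 : lv a.1 = lv p := by rw [h]
      have hn1 : n = 1 := by omega
      have hq1 : q = base := by
        rw [hqdef, hn1, pos_one, hG'b]
      rw [h, hp, hq1] at ha
      rcases (mem_tileEdges base ((base + ((1:ℤ),(0:ℤ)), true) : Edge)).1 ha with h'|h'|h'|h'
      · have := congrArg Prod.fst h'
        simp only at this
        exact pt_ne_add base (by simp) this.symm
      · have := congrArg Prod.fst h'
        simp only at this
        have := add_left_cancel this
        simp [Prod.ext_iff] at this
      · have := congrArg Prod.snd h'
        simp at this
      · have := congrArg Prod.snd h'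
        simp at this
    · -- a ≠ s2
      intro h
      have hl1 : lv a.1 = lv (p + ((0:ℤ),(1:ℤ))) := by rw [h]
      omega
    · -- a ≠ far
      intro h
      have hl1 : lv a.1 = lv (p + ((1:ℤ),(0:ℤ))) := by rw [h]
      omega
  · -- NORTH step
    have hstep' : step n = false := by
      cases hsn : step n
      · rfl
      · exact absurd hsn hstep
    have hp : p = q + ((0:ℤ),(1:ℤ)) := by
      rw [hpdef, pos_succ G' n hn]
      have hs : G'.step n = false := hstep'
      rw [hs, if_neg (by simp), hqdef]
    have hplv : lv p = lv base + n := by rw [hp, lv_add, lv01]; omega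
    have hintn : G'.intEdge n = ((p, true) : Edge) := by
      have hs : G'.step n = false := hstep'
      rw [SnakeGraph.intEdge, hs, if_neg (by simp)]
      rw [northEdge, hp, hqdef]
    have hlvu : lv (p + ((0:ℤ),(1:ℤ))) = lv base + n + 1 := by rw [lv_add, lv01]; omega
    have hlvw : lv (p + ((1:ℤ),(1:ℤ))) = lv base + n + 2 := by rw [lv_add, lv11]; omega
    have hlvy : lv (p + ((1:ℤ),(0:ℤ))) = lv base + n + 1 := by rw [lv_add, lv10]; omega
    refine step_lemma G G' a (p, true) (p, false) (p + ((1:ℤ),(0:ℤ)), false)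
      (p + ((0:ℤ),(1:ℤ)), true) p p (p + ((1:ℤ),(0:ℤ))) (p + ((0:ℤ),(1:ℤ)))
      (p + ((1:ℤ),(1:ℤ))) hE hV ?_ ?_ ?_ (endsS p) (endsW p) (endsE p) (endsN p)
      n10 n01 n11 n10_01 n10_11 n01_11 ?_ ?_ ?_ ?_ ?_ ?_ ?_ ?_ ?_ ?_ IH
    · intro e
      rw [hInt0, hintn]
    · intro e
      rw [mem_tileEdges]
      constructor
      · rintro (h|h|h|h)
        · exact Or.inl h
        · exact Or.inr (Or.inr (Or.inr h))
        · exact Or.inr (Or.inl h)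
        · exact Or.inr (Or.inr (Or.inl h))
      · rintro (h|h|h|h)
        · exact Or.inl h
        · exact Or.inr (Or.inr (Or.inl h))
        · exact Or.inr (Or.inr (Or.inr h))
        · exact Or.inr (Or.inl h)
    · exact fun v => mem_tileVerts p v
    · -- u ∉ G'.verts
      intro hmem
      obtain ⟨i, h1, h2, h3⟩ := mem_verts.1 hmem
      have h2' : i ≤ n := h2
      have hl := lv_pos G' i h1
      rw [hG'b] at hl
      have hc2 : lv (p + ((0:ℤ),(1:ℤ))) = lv (G'.pos i) + 2 := by
        rcases tileVerts_lv h3 with h'|h'|h' <;> omega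
      have hi : i = n := by omega
      subst hi
      have htop := tileVerts_top h3 hc2
      rw [hp, add_assoc] at htop
      have := add_left_cancel htop
      simp [Prod.ext_iff] at this
    · -- w ∉ G'.verts
      exact notMem_verts_high G' _ (by rw [hG'b, hG'd]; omega)
    · -- en ∈ G'.edges
      refine mem_edges.2 ⟨n, hn, le_refl _, ?_⟩
      rw [← hqdef, hp]
      exact (mem_tileEdges q _).2 (Or.inr (Or.inl rfl))
    · -- en not interior in G'
      exact not_interior_high G' _ (by rw [hG'b, hG'd]; show lv base + (n:ℤ) ≤ lv p; omega)
    · -- s1 ∉ G'.edges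
      intro hmem
      obtain ⟨i, h1, h2, h3⟩ := mem_edges.1 hmem
      have h2' : i ≤ n := h2
      have hl := lv_pos G' i h1
      rw [hG'b] at hl
      have hfst : ((p, false) : Edge).1 = p := rfl
      have hc1 : lv ((p, false) : Edge).1 = lv (G'.pos i) + 1 := by
        rcases tileEdges_lv h3 with h'|h' <;> rw [hfst] at h' ⊢ <;> omega
      have hi : i = n := by rw [hfst] at hc1; omega
      subst hi
      rcases tileEdges_top h3 hc1 with he|he
      · have := congrArg Prod.snd he
        simp at this
      · have hfe : p = q + ((1:ℤ),(0:ℤ)) := by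
          have := congrArg Prod.fst he
          simpa [hqdef] using this
        rw [hp] at hfe
        have := add_left_cancel hfe
        simp [Prod.ext_iff] at this
    · -- s2 ∉ G'.edges
      exact notMem_edges_high G' _ (by rw [hG'b, hG'd]; show _ ≤ lv (p + ((1:ℤ),(0:ℤ))); omega)
    · -- far ∉ G'.edges
      exact notMem_edges_high G' _ (by rw [hG'b, hG'd]; show _ ≤ lv (p + ((0:ℤ),(1:ℤ))); omega)
    · -- a ≠ s1
      intro h
      have hl1 : lv a.1 = lv p := by rw [h]
      have hn1 : n = 1 := by omega
      have hq1 : q = base := by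
        rw [hqdef, hn1, pos_one, hG'b]
      rw [h, hp, hq1] at ha
      rcases (mem_tileEdges base ((base + ((0:ℤ),(1:ℤ)), false) : Edge)).1 ha with h'|h'|h'|h'
      · have := congrArg Prod.snd h'
        simp at this
      · have := congrArg Prod.snd h'
        simp at this
      · have := congrArg Prod.fst h'
        simp only at this
        exact pt_ne_add base (by simp) this.symm
      · have := congrArg Prod.fst h'
        simp only at this
        have := add_left_cancel this
        simp [Prod.ext_iff] at this
    · -- a ≠ s2
      intro h
      have hl1 : lv a.1 = lv (p + ((1:ℤ),(0:ℤ))) := by rw [h]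
      omega
    · -- a ≠ far
      intro h
      have hl1 : lv a.1 = lv (p + ((0:ℤ),(1:ℤ))) := by rw [h]
      omega

end SnakeSol

namespace SnakeSol
open SnakeGraph

lemma aux_main : ∀ (n : ℕ) (hn : 1 ≤ n) (base : Pt) (step : ℕ → Bool) (a : Edge),
    a ∈ tileEdges base →
    ∃! P : Finset Edge,
      (⟨n, hn, base, step⟩ : SnakeGraph).IsPerfectMatching P ∧ a ∈ P ∧
      ∀ e ∈ P, e ≠ a → (⟨n, hn, base, step⟩ : SnakeGraph).IsBoundaryEdge e := by
  intro n hn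
  induction n, hn using Nat.le_induction with
  | base =>
      intro base step a ha
      exact base_case _ rfl a (by rwa [pos_one])
  | succ m hm ih =>
      intro base step a ha
      exact step_case m hm base step a ha (ih base step a ha)

end SnakeSol

/-- Let `𝒢` be a snake graph and `a` any edge of its first tile
`G₁`.  Then there is exactly one perfect matching `P` of `𝒢` such that `a ∈ P` and
every edge of `P` other than `a` is a boundary edge of `𝒢`. -/
theorem unique_matching_through_first_tile_edge (G : SnakeGraph) (a : Edge)
    (ha : a ∈ tileEdges (G.pos 1)) :
    ∃! P : Finset Edge,
      G.IsPerfectMatching P ∧ a ∈ P ∧ ∀ e ∈ P, e ≠ a → G.IsBoundaryEdge e := by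
  obtain ⟨d, hd, b, st⟩ := G
  rw [SnakeSol.pos_one] at ha
  exact SnakeSol.aux_main d hd b st a ha
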